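/- At error probability r = 10⁻⁴, there exists an input distribution q on the 64 codons whose mutual information through the ribosome channel exceeds 4.39 bits per use; hence C(10⁻⁴) > 4.39, a value lying strictly between g(10⁻⁴) and the upper bound log₂ 21. -/

import Mathlib

set_option maxHeartbeats 1000000


open Finset

/-- The ribosome channel: probability of output `y` given input codon `x`,
with error probability `r` and genetic code `G`. -/
noncomputable def rib (G : Fin 64 → Fin 21) (r : ℝ) (y : Fin 21) (x : Fin 64) : ℝ :=
  if y = G x then 1 - r else r / 20

/-- Mutual information (in bits) of the ribosome channel at input distribution `q`.
Note `Real.logb 2 0 = 0`, which realizes the convention `0 · log₂ 0 = 0`. -/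
noncomputable def mutualInfo (G : Fin 64 → Fin 21) (r : ℝ) (q : Fin 64 → ℝ) : ℝ :=
  ∑ x : Fin 64, ∑ y : Fin 21,
    q x * rib G r y x *
      Real.logb 2 (rib G r y x / ∑ x' : Fin 64, q x' * rib G r y x')

/-- `q` is a probability distribution on the 64 codons. -/
def IsDist (q : Fin 64 → ℝ) : Prop := (∀ x, 0 ≤ q x) ∧ ∑ x : Fin 64, q x = 1

/-- The channel capacity: supremum of the mutual information over all input distributions. -/
noncomputable def capacity (G : Fin 64 → Fin 21) (r : ℝ) : ℝ :=
  sSup {c : ℝ | ∃ q : Fin 64 → ℝ, IsDist q ∧ c = mutualInfo G r q}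

/-- `G` has the fiber sizes of the standard genetic code: exactly 2 outputs have a
fiber of size 1, 9 of size 2, 2 of size 3, 5 of size 4, and 3 of size 6. -/
def FiberCode (G : Fin 64 → Fin 21) : Prop :=
  ((univ.filter fun y : Fin 21 => (univ.filter fun x : Fin 64 => G x = y).card = 1).card = 2) ∧
  ((univ.filter fun y : Fin 21 => (univ.filter fun x : Fin 64 => G x = y).card = 2).card = 9) ∧
  ((univ.filter fun y : Fin 21 => (univ.filter fun x : Fin 64 => G x = y).card = 3).card = 2) ∧
  ((univ.filter fun y : Fin 21 => (univ.filter fun x : Fin 64 => G x = y).card = 4).card = 5) ∧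
  ((univ.filter fun y : Fin 21 => (univ.filter fun x : Fin 64 => G x = y).card = 6).card = 3)

/-- The lower-bound function `g` of Theorem II.1 (base-2 logarithms; since
`Real.logb 2 0 = 0`, terms of the form `0 · log₂ 0` vanish as intended). -/
noncomputable def g (r : ℝ) : ℝ :=
  (1/64) * (2*(1-r) * Real.logb 2 (1280*(1-r)/(43*r+20))
    + (63*r/10) * Real.logb 2 (64*r/(43*r+20))
    + 18*(1-r) * Real.logb 2 (640*(1-r)/(11*r+20))
    + (279*r/10) * Real.logb 2 (32*r/(11*r+20))
    + 6*(1-r) * Real.logb 2 (1280*(1-r)/(r+60))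
    + (61*r/10) * Real.logb 2 (64*r/(r+60))
    + 20*(1-r) * Real.logb 2 (64*(1-r)/(4-r))
    + 15*r * Real.logb 2 (16*r/(5*(4-r)))
    + 18*(1-r) * Real.logb 2 (640*(1-r)/(60-31*r))
    + (87*r/10) * Real.logb 2 (32*r/(60-31*r)))


lemma logb_le_of_pow {x : ℝ} (p q : ℕ) (hq : 0 < q) (hx : 0 < x) (h : x ^ q ≤ 2 ^ p) :
    Real.logb 2 x ≤ (p : ℝ) / q := by
  rw [Real.logb, div_le_div_iff₀ (Real.log_pos one_lt_two) (by positivity)]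
  have := Real.log_le_log (by positivity) h
  rw [Real.log_pow, Real.log_pow] at this
  linarith

lemma le_logb_of_pow {x : ℝ} (p q : ℕ) (hq : 0 < q) (hx : 0 < x) (h : 2 ^ p ≤ x ^ q) :
    (p : ℝ) / q ≤ Real.logb 2 x := by
  rw [Real.logb, le_div_iff₀ (Real.log_pos one_lt_two), div_mul_eq_mul_div,
    div_le_iff₀ (by positivity : (0:ℝ) < (q:ℝ))]
  have := Real.log_le_log (by positivity) h
  rw [Real.log_pow, Real.log_pow] at this
  linarith

lemma surj_of_fiberCode {G : Fin 64 → Fin 21} (hG : FiberCode G) : Function.Surjective G := by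
  obtain ⟨h1, h2, h3, h4, h6⟩ := hG
  intro y
  by_contra hy
  push_neg at hy
  -- then the fiber of y is empty, so y is in none of the five sets
  have hcard : (univ.filter fun x : Fin 64 => G x = y).card = 0 := by
    rw [Finset.card_eq_zero, Finset.filter_eq_empty_iff]
    intro x _; exact hy x
  set S : ℕ → Finset (Fin 21) :=
    fun k => univ.filter fun y : Fin 21 => (univ.filter fun x : Fin 64 => G x = y).card = k with hS
  have hdisj : ∀ i j : ℕ, i ≠ j → Disjoint (S i) (S j) := by
    intro i j hij
    simp only [Finset.disjoint_left, hS, Finset.mem_filter]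
    rintro a ⟨-, ha⟩ ⟨-, hb⟩
    exact hij (ha ▸ hb)
  have hsub : S 1 ∪ S 2 ∪ S 3 ∪ S 4 ∪ S 6 ⊆ univ.erase y := by
    intro z hz
    simp only [Finset.mem_union] at hz
    rw [Finset.mem_erase]
    refine ⟨?_, Finset.mem_univ z⟩
    rintro rfl
    simp only [hS, Finset.mem_filter, hcard] at hz
    omega
  have hle := Finset.card_le_card hsub
  rw [Finset.card_erase_of_mem (Finset.mem_univ y)] at hle
  have c1 : (S 1 ∪ S 2 ∪ S 3 ∪ S 4 ∪ S 6).card = 21 := by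
    rw [Finset.card_union_of_disjoint, Finset.card_union_of_disjoint,
      Finset.card_union_of_disjoint, Finset.card_union_of_disjoint]
    · rw [hS]; simp only []; omega
    · exact hdisj 1 2 (by norm_num)
    · exact Finset.disjoint_union_left.2 ⟨hdisj 1 3 (by norm_num), hdisj 2 3 (by norm_num)⟩
    · exact Finset.disjoint_union_left.2 ⟨Finset.disjoint_union_left.2
        ⟨hdisj 1 4 (by norm_num), hdisj 2 4 (by norm_num)⟩, hdisj 3 4 (by norm_num)⟩
    · exact Finset.disjoint_union_left.2 ⟨Finset.disjoint_union_left.2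
        ⟨Finset.disjoint_union_left.2 ⟨hdisj 1 6 (by norm_num), hdisj 2 6 (by norm_num)⟩,
          hdisj 3 6 (by norm_num)⟩, hdisj 4 6 (by norm_num)⟩
  rw [c1, Finset.card_univ, Fintype.card_fin] at hle
  omega

lemma mi_eq (G : Fin 64 → Fin 21) (hs : Function.Surjective G) (r : ℝ) :
    ∃ q : Fin 64 → ℝ, IsDist q ∧ mutualInfo G r q =
      (1 - r) * Real.logb 2 (21 * (1 - r)) + r * Real.logb 2 (21 * (r / 20)) := by
  classical
  set h : Fin 21 → Fin 64 := Function.surjInv hs with hh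
  have hGh : ∀ z, G (h z) = z := fun z => Function.surjInv_eq hs z
  have hinj : Function.Injective h := Function.injective_surjInv hs
  set T : Finset (Fin 64) := Finset.image h univ with hT
  have hcardT : T.card = 21 := by
    rw [hT, Finset.card_image_of_injective _ hinj, Finset.card_univ, Fintype.card_fin]
  set q : Fin 64 → ℝ := fun x => if x ∈ T then (1:ℝ)/21 else 0 with hq
  have hq1 : ∀ x ∈ T, q x = 1/21 := by intro x hx; rw [hq]; exact if_pos hx
  have hq0 : ∀ x ∉ T, q x = 0 := by intro x hx; rw [hq]; exact if_neg hx
  have hdist : IsDist q := by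
    constructor
    · intro x
      by_cases hx : x ∈ T
      · rw [hq1 x hx]; norm_num
      · rw [hq0 x hx]
    · have : ∀ x : Fin 64, q x = if x ∈ T then (1:ℝ)/21 else 0 := by
        intro x
        by_cases hx : x ∈ T
        · rw [hq1 x hx, if_pos hx]
        · rw [hq0 x hx, if_neg hx]
      rw [Finset.sum_congr rfl fun x _ => this x, Finset.sum_ite_mem, Finset.univ_inter,
        Finset.sum_const, hcardT]
      norm_num
  have hrib : ∀ y z, rib G r y (h z) = if y = z then 1 - r else r / 20 := by
    intro y z; rw [rib, hGh]
  -- each output has total probability 1/21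
  have hden : ∀ y : Fin 21, ∑ x' : Fin 64, q x' * rib G r y x' = 1/21 := by
    intro y
    have e1 : ∀ x' : Fin 64, q x' * rib G r y x'
        = if x' ∈ T then rib G r y x' * (1/21) else 0 := by
      intro x'
      by_cases hx : x' ∈ T
      · rw [hq1 x' hx, if_pos hx]; ring
      · rw [hq0 x' hx, if_neg hx]; ring
    rw [Finset.sum_congr rfl fun x' _ => e1 x', Finset.sum_ite_mem, Finset.univ_inter, hT,
      Finset.sum_image (fun a _ b _ hab => hinj hab)]
    have e2 : ∀ z : Fin 21, rib G r y (h z) * (1/21)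
        = (r/20) * (1/21) + (if y = z then (1 - r - r/20) * (1/21) else 0) := by
      intro z; rw [hrib]; split <;> ring
    rw [Finset.sum_congr rfl fun z _ => e2 z, Finset.sum_add_distrib, Finset.sum_const,
      Finset.sum_ite_eq, if_pos (Finset.mem_univ y), Finset.card_univ, Fintype.card_fin]
    push_cast
    ring
  -- compute the mutual information
  refine ⟨q, hdist, ?_⟩
  rw [mutualInfo]
  have e3 : ∀ x : Fin 64,
      (∑ y : Fin 21, q x * rib G r y x *
        Real.logb 2 (rib G r y x / ∑ x' : Fin 64, q x' * rib G r y x'))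
      = if x ∈ T then (∑ y : Fin 21, (1/21) * (rib G r y x * Real.logb 2 (rib G r y x * 21)))
        else 0 := by
    intro x
    by_cases hx : x ∈ T
    · rw [if_pos hx]
      refine Finset.sum_congr rfl fun y _ => ?_
      rw [hden y, hq1 x hx, one_div (21:ℝ), div_inv_eq_mul]
      ring
    · rw [if_neg hx, Finset.sum_eq_zero]
      intro y _
      rw [hq0 x hx]
      ring
  rw [Finset.sum_congr rfl fun x _ => e3 x, Finset.sum_ite_mem, Finset.univ_inter, hT,
    Finset.sum_image (fun a _ b _ hab => hinj hab)]
  have e4 : ∀ z : Fin 21,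
      (∑ y : Fin 21, (1/21) * (rib G r y (h z) * Real.logb 2 (rib G r y (h z) * 21)))
      = (1/21) * ((1 - r) * Real.logb 2 (21 * (1 - r)) + r * Real.logb 2 (21 * (r/20))) := by
    intro z
    have e5 : ∀ y : Fin 21, (1/21) * (rib G r y (h z) * Real.logb 2 (rib G r y (h z) * 21))
        = (1/21) * ((r/20) * Real.logb 2 (21 * (r/20)))
          + (if z = y then
              (1/21) * ((1-r) * Real.logb 2 (21 * (1-r)) - (r/20) * Real.logb 2 (21 * (r/20)))
            else 0) := by
      intro y
      rw [hrib]
      rcases eq_or_ne y z with rfl | hyz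
      · rw [if_pos rfl, if_pos rfl, mul_comm (1-r) 21]; ring
      · rw [if_neg hyz, if_neg (Ne.symm hyz), mul_comm (r/20) 21]; ring
    rw [Finset.sum_congr rfl fun y _ => e5 y, Finset.sum_add_distrib, Finset.sum_const,
      Finset.sum_ite_eq, if_pos (Finset.mem_univ z), Finset.card_univ, Fintype.card_fin]
    push_cast
    ring
  rw [Finset.sum_congr rfl fun z _ => e4 z, Finset.sum_const, Finset.card_univ, Fintype.card_fin]
  push_cast
  ring


lemma mi_bound (G : Fin 64 → Fin 21) (q : Fin 64 → ℝ) (hq : IsDist q) :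
    mutualInfo G (1/10000) q ≤ 378 := by
  obtain ⟨hq0, hq1⟩ := hq
  have hriblb : ∀ y x, (1:ℝ)/200000 ≤ rib G (1/10000) y x := by
    intro y x; rw [rib]; split <;> norm_num
  have hribub : ∀ y x, rib G (1/10000) y x ≤ 1 := by
    intro y x; rw [rib]; split <;> norm_num
  have hD : ∀ y : Fin 21, (1:ℝ)/200000 ≤ ∑ x' : Fin 64, q x' * rib G (1/10000) y x' := by
    intro y
    calc (1:ℝ)/200000 = ∑ x' : Fin 64, q x' * (1/200000) := by
          rw [← Finset.sum_mul, hq1, one_mul]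
      _ ≤ ∑ x' : Fin 64, q x' * rib G (1/10000) y x' :=
          Finset.sum_le_sum fun x' _ => mul_le_mul_of_nonneg_left (hriblb y x') (hq0 x')
  have key : ∀ (x : Fin 64) (y : Fin 21),
      q x * rib G (1/10000) y x *
        Real.logb 2 (rib G (1/10000) y x / ∑ x' : Fin 64, q x' * rib G (1/10000) y x')
      ≤ q x * 18 := by
    intro x y
    have hribpos : (0:ℝ) < rib G (1/10000) y x := lt_of_lt_of_le (by norm_num) (hriblb y x)
    have hDpos : (0:ℝ) < ∑ x' : Fin 64, q x' * rib G (1/10000) y x' :=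
      lt_of_lt_of_le (by norm_num) (hD y)
    have hlogb : Real.logb 2
        (rib G (1/10000) y x / ∑ x' : Fin 64, q x' * rib G (1/10000) y x') ≤ 18 := by
      have h18 := logb_le_of_pow (x := rib G (1/10000) y x /
          ∑ x' : Fin 64, q x' * rib G (1/10000) y x') 18 1 (by norm_num)
        (by positivity) ?_
      · simpa using h18
      · rw [pow_one, div_le_iff₀ hDpos]
        have := hD y
        have := hribub y x
        nlinarith
    calc q x * rib G (1/10000) y x *
          Real.logb 2 (rib G (1/10000) y x / ∑ x' : Fin 64, q x' * rib G (1/10000) y x')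
        ≤ q x * rib G (1/10000) y x * 18 := by
          apply mul_le_mul_of_nonneg_left hlogb
          exact mul_nonneg (hq0 x) hribpos.le
      _ ≤ q x * 18 := by nlinarith [hq0 x, hribub y x, hribpos]
  calc mutualInfo G (1/10000) q
      ≤ ∑ x : Fin 64, ∑ _y : Fin 21, q x * 18 := by
        rw [mutualInfo]
        exact Finset.sum_le_sum fun x _ => Finset.sum_le_sum fun y _ => key x y
    _ = 378 := by
        simp only [Finset.sum_const, Finset.card_univ, Fintype.card_fin, nsmul_eq_mul]
        have e : ∀ x : Fin 64, ((21:ℕ):ℝ) * (q x * 18) = q x * 378 := fun x => by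
          push_cast; ring
        rw [Finset.sum_congr rfl fun x _ => e x, ← Finset.sum_mul, hq1, one_mul]

/-- At `r = 10⁻⁴` there is an input distribution whose mutual information through the
ribosome channel exceeds `4.39` bits per use; hence `C(10⁻⁴) > 4.39`, which lies
strictly between `g(10⁻⁴)` and the upper bound `log₂ 21`. -/
theorem ribosome_capacity_near_upper_bound (G : Fin 64 → Fin 21) (hG : FiberCode G) :
    (∃ q : Fin 64 → ℝ, IsDist q ∧ (4.39 : ℝ) < mutualInfo G (1 / 10000) q) ∧
      (4.39 : ℝ) < capacity G (1 / 10000) ∧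
      g (1 / 10000) < (4.39 : ℝ) ∧ (4.39 : ℝ) < Real.logb 2 21 := by
  have hs : Function.Surjective G := surj_of_fiberCode hG
  obtain ⟨q0, hdist0, hval0⟩ := mi_eq G hs (1/10000)
  -- numeric lower bound on the mutual information of q0
  have hL1 : (549:ℝ)/125 ≤ Real.logb 2 (21 * (1 - 1/10000)) := by
    have : (21 : ℝ) * (1 - 1/10000) = 209979/10000 := by norm_num
    rw [this]
    apply le_logb_of_pow 549 125 (by norm_num) (by norm_num)
    rw [show (549:ℕ) = 9*61 by rfl, pow_mul]
    norm_num
  have hL2 : -(661/50 : ℝ) ≤ Real.logb 2 (21 * ((1/10000) / 20)) := by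
    have e : (21 : ℝ) * ((1/10000) / 20) = ((200000:ℝ)/21)⁻¹ := by norm_num
    rw [e, Real.logb_inv, neg_le_neg_iff]
    apply logb_le_of_pow 661 50 (by norm_num) (by norm_num)
    rw [div_pow, div_le_iff₀ (by positivity)]
    rw [show (661:ℕ) = 11*60+1 by rfl, pow_succ (2:ℝ), pow_mul]
    norm_num
  have hmi : (4.39 : ℝ) < mutualInfo G (1/10000) q0 := by
    rw [hval0]
    have c1 : (0:ℝ) < 1 - 1/10000 := by norm_num
    nlinarith [hL1, hL2]
  have hlogb21 : (4.39:ℝ) < Real.logb 2 21 := by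
    have := le_logb_of_pow (x := (21:ℝ)) 549 125 (by norm_num) (by norm_num) (by rw [show (549:ℕ) = 9*61 by rfl, pow_mul]; norm_num)
    have h2 : (4.39:ℝ) < (549:ℝ)/125 := by norm_num
    linarith
  have hcap : (4.39 : ℝ) < capacity G (1/10000) := by
    have hmem : mutualInfo G (1/10000) q0 ∈
        {c : ℝ | ∃ q : Fin 64 → ℝ, IsDist q ∧ c = mutualInfo G (1/10000) q} :=
      ⟨q0, hdist0, rfl⟩
    have hbdd : BddAbove {c : ℝ | ∃ q : Fin 64 → ℝ, IsDist q ∧ c = mutualInfo G (1/10000) q} := by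
      refine ⟨378, fun c hc => ?_⟩
      obtain ⟨q, hq, rfl⟩ := hc
      exact mi_bound G q hq
    exact lt_of_lt_of_le hmi (le_csSup hbdd hmem)
  have hg : g (1/10000) < 4.39 := by
    rw [g]
    have A1 : Real.logb 2 (1280*(1-(1/10000:ℝ))/(43*(1/10000)+20)) ≤ 6 := by
      have := logb_le_of_pow (x := 1280*(1-(1/10000:ℝ))/(43*(1/10000)+20)) 6 1
        (by norm_num) (by norm_num) (by norm_num)
      simpa using this
    have A3 : Real.logb 2 (640*(1-(1/10000:ℝ))/(11*(1/10000)+20)) ≤ 5 := by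
      have := logb_le_of_pow (x := 640*(1-(1/10000:ℝ))/(11*(1/10000)+20)) 5 1
        (by norm_num) (by norm_num) (by norm_num)
      simpa using this
    have A5 : Real.logb 2 (1280*(1-(1/10000:ℝ))/((1/10000)+60)) ≤ 9/2 := by
      have := logb_le_of_pow (x := 1280*(1-(1/10000:ℝ))/((1/10000)+60)) 9 2
        (by norm_num) (by norm_num) ?_
      · simpa using this
      · rw [div_pow, div_le_iff₀ (by positivity)]
        norm_num
    have A7 : Real.logb 2 (64*(1-(1/10000:ℝ))/(4-(1/10000))) ≤ 4 := by
      have := logb_le_of_pow (x := 64*(1-(1/10000:ℝ))/(4-(1/10000))) 4 1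
        (by norm_num) (by norm_num) (by norm_num)
      simpa using this
    have A9 : Real.logb 2 (640*(1-(1/10000:ℝ))/(60-31*(1/10000))) ≤ 7/2 := by
      have := logb_le_of_pow (x := 640*(1-(1/10000:ℝ))/(60-31*(1/10000))) 7 2
        (by norm_num) (by norm_num) ?_
      · simpa using this
      · rw [div_pow, div_le_iff₀ (by positivity)]
        norm_num
    have B2 : Real.logb 2 (64*(1/10000:ℝ)/(43*(1/10000)+20)) ≤ 0 :=
      Real.logb_nonpos (by norm_num) (by norm_num) (by norm_num)
    have B4 : Real.logb 2 (32*(1/10000:ℝ)/(11*(1/10000)+20)) ≤ 0 :=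
      Real.logb_nonpos (by norm_num) (by norm_num) (by norm_num)
    have B6 : Real.logb 2 (64*(1/10000:ℝ)/((1/10000)+60)) ≤ 0 :=
      Real.logb_nonpos (by norm_num) (by norm_num) (by norm_num)
    have B8 : Real.logb 2 (16*(1/10000:ℝ)/(5*(4-(1/10000)))) ≤ 0 :=
      Real.logb_nonpos (by norm_num) (by norm_num) (by norm_num)
    have B10 : Real.logb 2 (32*(1/10000:ℝ)/(60-31*(1/10000))) ≤ 0 :=
      Real.logb_nonpos (by norm_num) (by norm_num) (by norm_num)
    nlinarith [A1, A3, A5, A7, A9, B2, B4, B6, B8, B10]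
  exact ⟨⟨q0, hdist0, hmi⟩, hcap, hg, hlogb21⟩
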